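/- Let V be a real Hilbert space, T > 0, ε > 0, let F : ℝ × V × ℝ → ℝ be continuously Fréchet differentiable, and let λ : ℝ → ℝ be continuous with λ(s) > 0 for all s. Let v : [0,T] → V and σ : [0,T] → ℝ be continuously differentiable and satisfy, for every t ∈ [0,T]: ε·⟨v̇(t), w⟩ = −D_vF(t,v(t),σ(t))(w) for all w ∈ V, and ε·σ̇(t) = max(−∂_σF(t,v(t),σ(t)), 0)·λ(σ(t)). Then for all 0 ≤ s < t ≤ T: ε·∫_s^t ‖v̇(τ)‖² dτ + ε·∫_s^t σ̇(τ)²/λ(σ(τ)) dτ + F(t,v(t),σ(t)) = F(s,v(s),σ(s)) + ∫_s^t ∂_τF(τ,v(τ),σ(τ)) dτ. -/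

import Mathlib

open Set
open scoped RealInnerProductSpace

/-- The energy estimate of Theorem 3.5 (abstract form, with equality) for the
modified ε-gradient flow `ε·v̇ = −grad_vF`, `ε·σ̇ = (−∂_σF)⁺·λ(σ)`. -/
theorem epsilon_gradient_flow_energy_estimate
    {V : Type*} [NormedAddCommGroup V] [InnerProductSpace ℝ V] [CompleteSpace V]
    (T ε : ℝ) (hT : 0 < T) (hε : 0 < ε)
    (F : ℝ → V → ℝ → ℝ)
    (hF : ContDiff ℝ 1 (fun p : ℝ × V × ℝ => F p.1 p.2.1 p.2.2))
    (lam : ℝ → ℝ) (hlamcont : Continuous lam) (hlampos : ∀ s : ℝ, 0 < lam s)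
    (v : ℝ → V) (v' : ℝ → V) (σ σ' : ℝ → ℝ)
    (hv : ∀ t ∈ Icc (0:ℝ) T, HasDerivAt v (v' t) t)
    (hv' : ContinuousOn v' (Icc 0 T))
    (hσ : ∀ t ∈ Icc (0:ℝ) T, HasDerivAt σ (σ' t) t)
    (hσ' : ContinuousOn σ' (Icc 0 T))
    (heqv : ∀ t ∈ Icc (0:ℝ) T, ∀ w : V,
      ε * ⟪v' t, w⟫ = -(fderiv ℝ (fun u => F t u (σ t)) (v t)) w)
    (heqσ : ∀ t ∈ Icc (0:ℝ) T,
      ε * σ' t = max (-(deriv (fun s => F t (v t) s) (σ t))) 0 * lam (σ t)) :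
    ∀ s t : ℝ, 0 ≤ s → s < t → t ≤ T →
      ε * (∫ τ in s..t, ‖v' τ‖ ^ 2) + ε * (∫ τ in s..t, (σ' τ) ^ 2 / lam (σ τ))
        + F t (v t) (σ t)
      = F s (v s) (σ s) + ∫ τ in s..t, deriv (fun r => F r (v τ) (σ τ)) τ := by
  intro s t hs hst hT'
  set G : ℝ × V × ℝ → ℝ := fun p => F p.1 p.2.1 p.2.2 with hGdef
  have hGdiff : Differentiable ℝ G := hF.differentiable one_ne_zero
  have hsub : uIcc s t ⊆ Icc 0 T := by
    rw [uIcc_of_le hst.le]; exact Icc_subset_Icc hs hT'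
  have hvc : ContinuousOn v (Icc 0 T) := fun x hx =>
    (hv x hx).continuousAt.continuousWithinAt
  have hσc : ContinuousOn σ (Icc 0 T) := fun x hx =>
    (hσ x hx).continuousAt.continuousWithinAt
  have hcurve : ContinuousOn (fun τ => ((τ, v τ, σ τ) : ℝ × V × ℝ)) (Icc 0 T) :=
    continuousOn_id.prodMk (hvc.prodMk hσc)
  set h : ℝ → ℝ := fun τ => (fderiv ℝ G (τ, v τ, σ τ)) (1, 0, 0) with hhdef
  have hhc : ContinuousOn h (Icc 0 T) :=
    (((hF.continuous_fderiv one_ne_zero).comp_continuousOn hcurve).clm_apply continuousOn_const)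
  -- the time partial derivative equals h
  have hht : ∀ τ ∈ Icc (0:ℝ) T, deriv (fun r => F r (v τ) (σ τ)) τ = h τ := by
    intro τ hτ
    have hψ : HasDerivAt (fun r : ℝ => ((r, v τ, σ τ) : ℝ × V × ℝ)) (1, 0, 0) τ :=
      (hasDerivAt_id τ).prodMk ((hasDerivAt_const _ _).prodMk (hasDerivAt_const _ _))
    exact ((hGdiff (τ, v τ, σ τ)).hasFDerivAt.comp_hasDerivAt τ hψ).deriv
  -- main derivative computation
  have key : ∀ τ ∈ Icc (0:ℝ) T,
      HasDerivAt (fun r => F r (v r) (σ r))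
        (h τ - ε * ‖v' τ‖ ^ 2 - ε * (σ' τ) ^ 2 / lam (σ τ)) τ := by
    intro τ hτ
    have hcurve' : HasDerivAt (fun r => ((r, v r, σ r) : ℝ × V × ℝ)) (1, v' τ, σ' τ) τ :=
      (hasDerivAt_id τ).prodMk ((hv τ hτ).prodMk (hσ τ hτ))
    have hg : HasDerivAt (fun r => F r (v r) (σ r))
        ((fderiv ℝ G (τ, v τ, σ τ)) (1, v' τ, σ' τ)) τ :=
      by have := (hGdiff (τ, v τ, σ τ)).hasFDerivAt.comp_hasDerivAt τ hcurve'; exact this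
    convert hg using 1
    have hsplit : ((1:ℝ), v' τ, σ' τ)
        = (((1:ℝ), (0:V), (0:ℝ)) + ((0:ℝ), v' τ, (0:ℝ))) + ((0:ℝ), (0:V), σ' τ) := by
      simp [Prod.ext_iff]
    rw [hsplit, map_add, map_add]
    -- v-part
    have hφ : HasFDerivAt (fun u : V => ((τ, u, σ τ) : ℝ × V × ℝ))
        ((0 : V →L[ℝ] ℝ).prod ((ContinuousLinearMap.id ℝ V).prod 0)) (v τ) :=
      (hasFDerivAt_const _ _).prodMk ((hasFDerivAt_id _).prodMk (hasFDerivAt_const _ _))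
    have hcompv : HasFDerivAt (fun u : V => F τ u (σ τ))
        ((fderiv ℝ G (τ, v τ, σ τ)).comp
          ((0 : V →L[ℝ] ℝ).prod ((ContinuousLinearMap.id ℝ V).prod 0))) (v τ) :=
      by have := (hGdiff (τ, v τ, σ τ)).hasFDerivAt.comp (v τ) hφ; exact this
    have hDv : (fderiv ℝ G (τ, v τ, σ τ)) ((0:ℝ), v' τ, (0:ℝ)) = -(ε * ‖v' τ‖ ^ 2) := by
      have := heqv τ hτ (v' τ)
      rw [hcompv.fderiv] at this
      simp only [ContinuousLinearMap.coe_comp', Function.comp_apply,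
        ContinuousLinearMap.prod_apply, ContinuousLinearMap.coe_id',
        ContinuousLinearMap.zero_apply, id_eq] at this
      rw [real_inner_self_eq_norm_sq] at this
      linarith [this]
    -- σ-part
    have hψσ : HasDerivAt (fun r : ℝ => ((τ, v τ, r) : ℝ × V × ℝ)) (0, 0, 1) (σ τ) :=
      (hasDerivAt_const _ _).prodMk ((hasDerivAt_const _ _).prodMk (hasDerivAt_id _))
    have hcompσ : HasDerivAt (fun r => F τ (v τ) r)
        ((fderiv ℝ G (τ, v τ, σ τ)) (0, 0, 1)) (σ τ) :=
      by have := (hGdiff (τ, v τ, σ τ)).hasFDerivAt.comp_hasDerivAt _ hψσ; exact this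
    set D : ℝ := (fderiv ℝ G (τ, v τ, σ τ)) (0, 0, 1) with hDdef
    have hmax : ε * σ' τ = max (-D) 0 * lam (σ τ) := by
      have := heqσ τ hτ
      rwa [hcompσ.deriv] at this
    have hsm : ((0:ℝ), (0:V), σ' τ) = σ' τ • ((0:ℝ), (0:V), (1:ℝ)) := by
      simp [Prod.ext_iff]
    have hDσ : (fderiv ℝ G (τ, v τ, σ τ)) ((0:ℝ), (0:V), σ' τ)
        = -(ε * (σ' τ) ^ 2 / lam (σ τ)) := by
      rw [hsm, map_smul]
      have hlam := hlampos (σ τ)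
      rcases le_or_gt D 0 with hD | hD
      · have hm : max (-D) 0 = -D := max_eq_left (by linarith)
        rw [hm] at hmax
        rw [smul_eq_mul]
        have hl := hlam.ne'
        field_simp
        rw [← hDdef]
        linear_combination (σ' τ) * hmax
      · have hm : max (-D) 0 = 0 := max_eq_right (by linarith)
        rw [hm, zero_mul] at hmax
        have hσ0 : σ' τ = 0 := by
          rcases mul_eq_zero.mp hmax with h0 | h0
          · exact absurd h0 hε.ne'
          · exact h0
        simp [hσ0]
    rw [hDv, hDσ]
    simp only [hhdef]
    ring
  -- integrability
  have hint1 : IntervalIntegrable (fun τ => ‖v' τ‖ ^ 2) MeasureTheory.volume s t :=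
    (((hv'.norm).pow 2).mono hsub).intervalIntegrable
  have hint2 : IntervalIntegrable (fun τ => (σ' τ) ^ 2 / lam (σ τ))
      MeasureTheory.volume s t := by
    apply ContinuousOn.intervalIntegrable
    exact ((hσ'.pow 2).div (hlamcont.comp_continuousOn hσc)
      (fun x hx => (hlampos _).ne')).mono hsub
  have hint3 : IntervalIntegrable h MeasureTheory.volume s t :=
    (hhc.mono hsub).intervalIntegrable
  have hFTC : (∫ τ in s..t, (h τ - ε * ‖v' τ‖ ^ 2 - ε * (σ' τ) ^ 2 / lam (σ τ)))
      = F t (v t) (σ t) - F s (v s) (σ s) := by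
    apply intervalIntegral.integral_eq_sub_of_hasDerivAt
    · intro x hx; exact key x (hsub hx)
    · exact (hint3.sub (hint1.const_mul ε)).sub
        (by simpa [mul_div_assoc] using hint2.const_mul ε)
  have hsplit2 : (∫ τ in s..t, (h τ - ε * ‖v' τ‖ ^ 2 - ε * (σ' τ) ^ 2 / lam (σ τ)))
      = (∫ τ in s..t, h τ) - ε * (∫ τ in s..t, ‖v' τ‖ ^ 2)
        - ε * (∫ τ in s..t, (σ' τ) ^ 2 / lam (σ τ)) := by
    rw [intervalIntegral.integral_sub (hint3.sub (hint1.const_mul ε))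
        (by simpa [mul_div_assoc] using hint2.const_mul ε),
      intervalIntegral.integral_sub hint3 (hint1.const_mul ε),
      intervalIntegral.integral_const_mul]
    rw [show (fun τ => ε * (σ' τ) ^ 2 / lam (σ τ)) = fun τ => ε * ((σ' τ) ^ 2 / lam (σ τ))
        from funext fun τ => by ring]
    rw [intervalIntegral.integral_const_mul]
  have hcongr : (∫ τ in s..t, deriv (fun r => F r (v τ) (σ τ)) τ) = ∫ τ in s..t, h τ := by
    apply intervalIntegral.integral_congr
    intro τ hτ
    exact hht τ (hsub hτ)
  rw [hcongr]
  rw [hsplit2] at hFTC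
  linarith [hFTC]
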